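/- Let F be the group with presentation ⟨x, y, a ∣ (yx)y(yx)⁻¹x⁻¹ = 1, (x⁻¹ax)a⁻¹x⁻¹(yay⁻¹) = 1⟩ and let σ = (1 5 4 3 2) ∈ A₅. Then the number of group homomorphisms φ : F → A₅ with φ(a) = σ equals 1. -/

import Mathlib

open Equiv Equiv.Perm

/-- Generator `x` of the free group on three generators. -/
def X : FreeGroup (Fin 3) := FreeGroup.of 0
/-- Generator `y`. -/
def Y : FreeGroup (Fin 3) := FreeGroup.of 1
/-- Generator `a`. -/
def A : FreeGroup (Fin 3) := FreeGroup.of 2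

/-- Relator r₁ = (yx)·y·(yx)⁻¹·x⁻¹. -/
def r1 : FreeGroup (Fin 3) := (Y * X) * Y * (Y * X)⁻¹ * X⁻¹
/-- Relator r₂ = (x⁻¹ a x)·a⁻¹·x⁻¹·(y a y⁻¹). -/
def r2 : FreeGroup (Fin 3) := (X⁻¹ * A * X) * A⁻¹ * X⁻¹ * (Y * A * Y⁻¹)

/-- The relator set of the presentation
`⟨x, y, a ∣ (yx)y(yx)⁻¹x⁻¹ = 1, (x⁻¹ax)a⁻¹x⁻¹(yay⁻¹) = 1⟩`. -/
def rels : Set (FreeGroup (Fin 3)) := {r1, r2}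

/-! ### Auxiliary: encoding permutations of `Fin 5` as lists of naturals -/

/-- The 5-cycle σ. -/
def sg : Perm (Fin 5) := c[0, 4, 3, 2, 1]

/-- Encode a permutation as the list of its values. -/
def enc (p : Perm (Fin 5)) : List ℕ := List.ofFn (fun i => (p i : ℕ))

/-- Composition of encoded permutations. -/
def comp (p q : List ℕ) : List ℕ := q.map (fun i => p.getD i 0)

def idl : List ℕ := [0, 1, 2, 3, 4]
def ag : List ℕ := [4, 0, 1, 2, 3]
def agi : List ℕ := [1, 2, 3, 4, 0]

/-- All 120 permutations of `{0,…,4}` together with their inverses. -/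
def allPairs : List (List ℕ × List ℕ) := [
  ([0,1,2,3,4], [0,1,2,3,4]),
  ([0,1,2,4,3], [0,1,2,4,3]),
  ([0,1,3,2,4], [0,1,3,2,4]),
  ([0,1,3,4,2], [0,1,4,2,3]),
  ([0,1,4,2,3], [0,1,3,4,2]),
  ([0,1,4,3,2], [0,1,4,3,2]),
  ([0,2,1,3,4], [0,2,1,3,4]),
  ([0,2,1,4,3], [0,2,1,4,3]),
  ([0,2,3,1,4], [0,3,1,2,4]),
  ([0,2,3,4,1], [0,4,1,2,3]),
  ([0,2,4,1,3], [0,3,1,4,2]),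
  ([0,2,4,3,1], [0,4,1,3,2]),
  ([0,3,1,2,4], [0,2,3,1,4]),
  ([0,3,1,4,2], [0,2,4,1,3]),
  ([0,3,2,1,4], [0,3,2,1,4]),
  ([0,3,2,4,1], [0,4,2,1,3]),
  ([0,3,4,1,2], [0,3,4,1,2]),
  ([0,3,4,2,1], [0,4,3,1,2]),
  ([0,4,1,2,3], [0,2,3,4,1]),
  ([0,4,1,3,2], [0,2,4,3,1]),
  ([0,4,2,1,3], [0,3,2,4,1]),
  ([0,4,2,3,1], [0,4,2,3,1]),
  ([0,4,3,1,2], [0,3,4,2,1]),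
  ([0,4,3,2,1], [0,4,3,2,1]),
  ([1,0,2,3,4], [1,0,2,3,4]),
  ([1,0,2,4,3], [1,0,2,4,3]),
  ([1,0,3,2,4], [1,0,3,2,4]),
  ([1,0,3,4,2], [1,0,4,2,3]),
  ([1,0,4,2,3], [1,0,3,4,2]),
  ([1,0,4,3,2], [1,0,4,3,2]),
  ([1,2,0,3,4], [2,0,1,3,4]),
  ([1,2,0,4,3], [2,0,1,4,3]),
  ([1,2,3,0,4], [3,0,1,2,4]),
  ([1,2,3,4,0], [4,0,1,2,3]),
  ([1,2,4,0,3], [3,0,1,4,2]),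
  ([1,2,4,3,0], [4,0,1,3,2]),
  ([1,3,0,2,4], [2,0,3,1,4]),
  ([1,3,0,4,2], [2,0,4,1,3]),
  ([1,3,2,0,4], [3,0,2,1,4]),
  ([1,3,2,4,0], [4,0,2,1,3]),
  ([1,3,4,0,2], [3,0,4,1,2]),
  ([1,3,4,2,0], [4,0,3,1,2]),
  ([1,4,0,2,3], [2,0,3,4,1]),
  ([1,4,0,3,2], [2,0,4,3,1]),
  ([1,4,2,0,3], [3,0,2,4,1]),
  ([1,4,2,3,0], [4,0,2,3,1]),
  ([1,4,3,0,2], [3,0,4,2,1]),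
  ([1,4,3,2,0], [4,0,3,2,1]),
  ([2,0,1,3,4], [1,2,0,3,4]),
  ([2,0,1,4,3], [1,2,0,4,3]),
  ([2,0,3,1,4], [1,3,0,2,4]),
  ([2,0,3,4,1], [1,4,0,2,3]),
  ([2,0,4,1,3], [1,3,0,4,2]),
  ([2,0,4,3,1], [1,4,0,3,2]),
  ([2,1,0,3,4], [2,1,0,3,4]),
  ([2,1,0,4,3], [2,1,0,4,3]),
  ([2,1,3,0,4], [3,1,0,2,4]),
  ([2,1,3,4,0], [4,1,0,2,3]),
  ([2,1,4,0,3], [3,1,0,4,2]),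
  ([2,1,4,3,0], [4,1,0,3,2]),
  ([2,3,0,1,4], [2,3,0,1,4]),
  ([2,3,0,4,1], [2,4,0,1,3]),
  ([2,3,1,0,4], [3,2,0,1,4]),
  ([2,3,1,4,0], [4,2,0,1,3]),
  ([2,3,4,0,1], [3,4,0,1,2]),
  ([2,3,4,1,0], [4,3,0,1,2]),
  ([2,4,0,1,3], [2,3,0,4,1]),
  ([2,4,0,3,1], [2,4,0,3,1]),
  ([2,4,1,0,3], [3,2,0,4,1]),
  ([2,4,1,3,0], [4,2,0,3,1]),
  ([2,4,3,0,1], [3,4,0,2,1]),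
  ([2,4,3,1,0], [4,3,0,2,1]),
  ([3,0,1,2,4], [1,2,3,0,4]),
  ([3,0,1,4,2], [1,2,4,0,3]),
  ([3,0,2,1,4], [1,3,2,0,4]),
  ([3,0,2,4,1], [1,4,2,0,3]),
  ([3,0,4,1,2], [1,3,4,0,2]),
  ([3,0,4,2,1], [1,4,3,0,2]),
  ([3,1,0,2,4], [2,1,3,0,4]),
  ([3,1,0,4,2], [2,1,4,0,3]),
  ([3,1,2,0,4], [3,1,2,0,4]),
  ([3,1,2,4,0], [4,1,2,0,3]),
  ([3,1,4,0,2], [3,1,4,0,2]),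
  ([3,1,4,2,0], [4,1,3,0,2]),
  ([3,2,0,1,4], [2,3,1,0,4]),
  ([3,2,0,4,1], [2,4,1,0,3]),
  ([3,2,1,0,4], [3,2,1,0,4]),
  ([3,2,1,4,0], [4,2,1,0,3]),
  ([3,2,4,0,1], [3,4,1,0,2]),
  ([3,2,4,1,0], [4,3,1,0,2]),
  ([3,4,0,1,2], [2,3,4,0,1]),
  ([3,4,0,2,1], [2,4,3,0,1]),
  ([3,4,1,0,2], [3,2,4,0,1]),
  ([3,4,1,2,0], [4,2,3,0,1]),
  ([3,4,2,0,1], [3,4,2,0,1]),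
  ([3,4,2,1,0], [4,3,2,0,1]),
  ([4,0,1,2,3], [1,2,3,4,0]),
  ([4,0,1,3,2], [1,2,4,3,0]),
  ([4,0,2,1,3], [1,3,2,4,0]),
  ([4,0,2,3,1], [1,4,2,3,0]),
  ([4,0,3,1,2], [1,3,4,2,0]),
  ([4,0,3,2,1], [1,4,3,2,0]),
  ([4,1,0,2,3], [2,1,3,4,0]),
  ([4,1,0,3,2], [2,1,4,3,0]),
  ([4,1,2,0,3], [3,1,2,4,0]),
  ([4,1,2,3,0], [4,1,2,3,0]),
  ([4,1,3,0,2], [3,1,4,2,0]),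
  ([4,1,3,2,0], [4,1,3,2,0]),
  ([4,2,0,1,3], [2,3,1,4,0]),
  ([4,2,0,3,1], [2,4,1,3,0]),
  ([4,2,1,0,3], [3,2,1,4,0]),
  ([4,2,1,3,0], [4,2,1,3,0]),
  ([4,2,3,0,1], [3,4,1,2,0]),
  ([4,2,3,1,0], [4,3,1,2,0]),
  ([4,3,0,1,2], [2,3,4,1,0]),
  ([4,3,0,2,1], [2,4,3,1,0]),
  ([4,3,1,0,2], [3,2,4,1,0]),
  ([4,3,1,2,0], [4,2,3,1,0]),
  ([4,3,2,0,1], [3,4,2,1,0]),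
  ([4,3,2,1,0], [4,3,2,1,0])]

set_option maxRecDepth 100000
set_option maxHeartbeats 10000000

lemma enc_getD (p : Perm (Fin 5)) (i : ℕ) (h : i < 5) :
    (enc p).getD i 0 = (p ⟨i, h⟩ : ℕ) := by
  rw [enc, List.getD_eq_getElem _ _ (by simpa using h), List.getElem_ofFn]

lemma enc_mul (p q : Perm (Fin 5)) : enc (p * q) = comp (enc p) (enc q) := by
  have h : comp (enc p) (enc q) =
      List.ofFn ((fun i => (enc p).getD i 0) ∘ fun i : Fin 5 => ((q i : ℕ))) := by
    rw [comp, enc]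
    exact List.map_ofFn
  rw [h]
  show List.ofFn (fun i => (((p * q) i : Fin 5) : ℕ)) = _
  exact congrArg List.ofFn (funext fun i => (enc_getD p _ (q i).isLt).symm)

lemma enc_inj {p q : Perm (Fin 5)} (h : enc p = enc q) : p = q := by
  apply Equiv.coe_fn_injective
  funext i
  have := List.ofFn_inj.mp h
  exact Fin.val_injective (congrFun this i)

lemma enc_one : enc 1 = idl := by decide

lemma enc_sg : enc sg = ag := by decide

lemma enc_sg_inv : enc sg⁻¹ = agi := by decide

set_option maxHeartbeats 10000000 in
set_option maxRecDepth 100000 in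
lemma mem_fst (x : Perm (Fin 5)) : enc x ∈ allPairs.map Prod.fst := by
  have hnd : (enc x).Nodup := by
    rw [enc, List.nodup_ofFn]
    exact Fin.val_injective.comp x.injective
  have hsub : ∀ a ∈ List.range 5, ∀ b ∈ List.range 5, ∀ c ∈ List.range 5,
      ∀ d ∈ List.range 5, ∀ e ∈ List.range 5,
      ([a, b, c, d, e] : List ℕ).Nodup → [a, b, c, d, e] ∈ allPairs.map Prod.fst := by
    decide
  have hlist : enc x = [(x 0 : ℕ), x 1, x 2, x 3, x 4] := by
    simp [enc, List.ofFn_succ]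
  rw [hlist] at hnd ⊢
  have hm : ∀ i : Fin 5, ((x i : ℕ)) ∈ List.range 5 := fun i => List.mem_range.mpr (x i).isLt
  exact hsub _ (hm 0) _ (hm 1) _ (hm 2) _ (hm 3) _ (hm 4) hnd

lemma pairs_ok : ∀ pr ∈ allPairs,
    comp pr.1 pr.2 = idl ∧ pr.2.length = 5 ∧ ∀ a ∈ pr.2, a < 5 := by decide

lemma pair_snd {pr : List ℕ × List ℕ} (hpr : pr ∈ allPairs) (x : Perm (Fin 5))
    (h1 : pr.1 = enc x) : pr.2 = enc x⁻¹ := by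
  obtain ⟨hc, hl, hb⟩ := pairs_ok pr hpr
  rw [h1] at hc
  have hlen : (enc x⁻¹).length = 5 := by simp [enc]
  apply List.ext_getElem (by rw [hl, hlen])
  intro j hj hj'
  have hj5 : j < 5 := by rwa [hl] at hj
  have hcj := congrArg (fun l => l.getD j 0) hc
  simp only [comp] at hcj
  rw [List.getD_eq_getElem _ _ (by simpa [hl] using hj5),
      List.getD_eq_getElem _ _ (by simp [idl]; exact hj5)] at hcj
  rw [List.getElem_map] at hcj
  have hb' : pr.2[j] < 5 := hb _ (List.getElem_mem _)
  rw [enc_getD x _ hb'] at hcj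
  have hidl : idl[j]'(by simp [idl]; exact hj5) = j := by
    simp only [idl]
    interval_cases j <;> rfl
  rw [hidl] at hcj
  have hxj : x ⟨pr.2[j], hb'⟩ = ⟨j, hj5⟩ := Fin.ext hcj
  have : (⟨pr.2[j], hb'⟩ : Fin 5) = x⁻¹ ⟨j, hj5⟩ := by
    rw [← hxj]; simp
  simp only [enc, List.getElem_ofFn]
  exact congrArg Fin.val this

lemma mem_pairs (x : Perm (Fin 5)) : (enc x, enc x⁻¹) ∈ allPairs := by
  obtain ⟨pr, hpr, hfst⟩ := List.mem_map.mp (mem_fst x)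
  have hsnd := pair_snd hpr x hfst
  have : pr = (enc x, enc x⁻¹) := Prod.ext hfst hsnd
  rwa [this] at hpr

def r1b (px py : List ℕ × List ℕ) : Bool :=
  comp py.1 (comp px.1 (comp py.1 (comp px.2 (comp py.2 px.2)))) == idl

def r2b (px py : List ℕ × List ℕ) : Bool :=
  comp px.2 (comp ag (comp px.1 (comp agi (comp px.2 (comp py.1 (comp ag py.2)))))) == idl

set_option maxHeartbeats 10000000 in
set_option maxRecDepth 100000 in
lemma CheckB : (allPairs.all fun px => allPairs.all fun py =>
    !(r1b px py && r2b px py) || (px.1 == ag && py.1 == ag)) = true := by decide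

/-- The key uniqueness fact. -/
lemma key (x y : Perm (Fin 5))
    (h1 : y * x * y * (y * x)⁻¹ * x⁻¹ = 1)
    (h2 : x⁻¹ * sg * x * sg⁻¹ * x⁻¹ * (y * sg * y⁻¹) = 1) :
    x = sg ∧ y = sg := by
  have hx := mem_pairs x
  have hy := mem_pairs y
  have hall := List.all_eq_true.mp CheckB _ hx
  have h := List.all_eq_true.mp (hall) _ hy
  have hr1 : r1b (enc x, enc x⁻¹) (enc y, enc y⁻¹) = true := by
    have e1 : y * (x * (y * (x⁻¹ * (y⁻¹ * x⁻¹)))) = 1 := by rw [← h1]; group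
    simp only [r1b, ← enc_mul, e1, enc_one, beq_self_eq_true]
  have hr2 : r2b (enc x, enc x⁻¹) (enc y, enc y⁻¹) = true := by
    have e2 : x⁻¹ * (sg * (x * (sg⁻¹ * (x⁻¹ * (y * (sg * y⁻¹)))))) = 1 := by
      rw [← h2]; group
    simp only [r2b, ← enc_sg, ← enc_sg_inv, ← enc_mul, e2, enc_one, beq_self_eq_true]
  rw [hr1, hr2] at h
  simp only [Bool.and_self, Bool.not_true, Bool.false_or, Bool.and_eq_true,
    beq_iff_eq] at h
  exact ⟨enc_inj (h.1.trans enc_sg.symm), enc_inj (h.2.trans enc_sg.symm)⟩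

lemma mk_rels_eq_one {r : FreeGroup (Fin 3)} (hr : r ∈ rels) :
    PresentedGroup.mk rels r = 1 :=
  (QuotientGroup.eq_one_iff _).mpr (Subgroup.subset_normalClosure hr)

/-- The number of group homomorphisms `φ : F → A₅` with `φ(a) = (1 5 4 3 2)` equals `1`. -/
theorem stmt1 (σ : alternatingGroup (Fin 5))
    (hσ : (σ : Equiv.Perm (Fin 5)) = c[0, 4, 3, 2, 1]) :
    Nat.card {φ : PresentedGroup rels →* alternatingGroup (Fin 5) //
      φ (PresentedGroup.of 2) = σ} = 1 := by
  have hσ' : (σ : Perm (Fin 5)) = sg := hσ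
  rw [Nat.card_eq_one_iff_unique]
  constructor
  · -- uniqueness
    have main : ∀ χ : PresentedGroup rels →* alternatingGroup (Fin 5),
        χ (PresentedGroup.of 2) = σ →
        χ (PresentedGroup.of 0) = σ ∧ χ (PresentedGroup.of 1) = σ := by
      intro χ hχ
      set ρ : FreeGroup (Fin 3) →* Perm (Fin 5) :=
        ((alternatingGroup (Fin 5)).subtype.comp χ).comp (PresentedGroup.mk rels) with hρ
      have hρa : ρ A = sg := by
        have : ρ A = (χ (PresentedGroup.of 2) : Perm (Fin 5)) := rfl
        rw [this, hχ, hσ']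
      have E1 : ρ r1 = 1 := by
        rw [hρ]; simp only [MonoidHom.comp_apply]
        rw [mk_rels_eq_one (by simp [rels]), map_one, map_one]
      have E2 : ρ r2 = 1 := by
        rw [hρ]; simp only [MonoidHom.comp_apply]
        rw [mk_rels_eq_one (by simp [rels]), map_one, map_one]
      simp only [r1, X, Y, map_mul, map_inv] at E1
      simp only [r2, X, Y, map_mul, map_inv, hρa] at E2
      obtain ⟨hx, hy⟩ := key (ρ X) (ρ Y) (by simpa [X, Y] using E1)
        (by simpa [X, Y] using E2)
      constructor
      · apply Subtype.ext; rw [hσ']; exact hx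
      · apply Subtype.ext; rw [hσ']; exact hy
    constructor
    rintro ⟨φ, hφ⟩ ⟨ψ, hψ⟩
    obtain ⟨hφ0, hφ1⟩ := main φ hφ
    obtain ⟨hψ0, hψ1⟩ := main ψ hψ
    apply Subtype.ext
    apply PresentedGroup.ext
    intro i
    fin_cases i
    · exact hφ0.trans hψ0.symm
    · exact hφ1.trans hψ1.symm
    · exact hφ.trans hψ.symm
  · -- existence
    have hrel : ∀ r ∈ rels, FreeGroup.lift (fun _ : Fin 3 => σ) r = 1 := by
      intro r hr
      rcases hr with rfl | rfl
      · simp only [r1, X, Y, map_mul, map_inv, FreeGroup.lift_apply_of]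
        group
      · simp only [r2, X, Y, A, map_mul, map_inv, FreeGroup.lift_apply_of]
        group
    exact ⟨⟨PresentedGroup.toGroup hrel, PresentedGroup.toGroup.of hrel⟩⟩
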